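/- Let N ≥ 1, τ ≥ 1, T ≥ 1. Let θ_i, θ_j : ℕ → Fin N be τ-periodic CH sequences, let x be a wake-up schedule with period T with A = f(T) ≥ 1 and gcd(A, τ) = 1, and let θ'_i, θ'_j be interleavings of θ_i, θ_j along x. Fix a clock drift k : ℕ and suppose t₀ satisfies x(t₀) = true and x(t₀ + k) = true, and set d = f(t₀ + k) − f(t₀). Then the number of sampled slots among {a·T + t₀ : a < τ} at which the interleaved sequences rendezvous under drift k equals the number of rendezvous slots per period of the original sequences under drift d: card {a < τ | θ'_i(a·T + t₀) = θ'_j(a·T + t₀ + k)} = card {a < τ | θ_i(a) = θ_j(a + d)}. -/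

import Mathlib

/-- **Sampled rendezvous-slot count (proof of Theorem 1).**
Fix a clock drift `k` and an awake slot `t₀` with `x t₀ = x (t₀ + k) = true`,
and set `d = f (t₀ + k) - f t₀`. With `gcd (A, τ) = 1`, the number of sampled
slots among `{a * T + t₀ : a < τ}` at which the interleaved sequences
rendezvous under drift `k` equals the number of rendezvous slots per period of
the original sequences under drift `d`. -/
theorem sampled_rendezvous_count (N τ T : ℕ) (hN : 1 ≤ N) (hτ : 1 ≤ τ) (hT : 1 ≤ T)
    (θi θj : ℕ → Fin N)
    (hθi : ∀ t, θi (t + τ) = θi t) (hθj : ∀ t, θj (t + τ) = θj t)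
    (x : ℕ → Bool) (hx : ∀ t, x (t + T) = x t)
    (f : ℕ → ℕ)
    (hf : ∀ t, f t = ((Finset.range t).filter (fun s => x s = true)).card)
    (A : ℕ) (hA : A = f T) (hA1 : 1 ≤ A) (hgcd : Nat.gcd A τ = 1)
    (θi' θj' : ℕ → Fin N)
    (hθi' : ∀ t, x t = true → θi' t = θi (f t))
    (hθj' : ∀ t, x t = true → θj' t = θj (f t))
    (k : ℕ) (t₀ : ℕ) (ht₀ : x t₀ = true) (ht₀k : x (t₀ + k) = true)
    (d : ℕ) (hd : d = f (t₀ + k) - f t₀) :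
    ((Finset.range τ).filter
        (fun a => θi' (a * T + t₀) = θj' (a * T + t₀ + k))).card
      = ((Finset.range τ).filter (fun a => θi a = θj (a + d))).card := by
  haveI : NeZero τ := ⟨by omega⟩
  -- successor formula for f
  have hfsucc : ∀ n, f (n + 1) = f n + (if x n = true then 1 else 0) := by
    intro n
    rw [hf, hf, Finset.range_add_one, Finset.filter_insert]
    split
    · rw [Finset.card_insert_of_notMem (by simp)]
    · simp
  -- f is monotone enough
  have hmono : f t₀ ≤ f (t₀ + k) := by
    rw [hf, hf]
    exact Finset.card_le_card (Finset.filter_subset_filter _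
      (Finset.range_subset_range.mpr (Nat.le_add_right _ _)))
  have hfd : f (t₀ + k) = f t₀ + d := by omega
  -- shift by one period
  have hfT : ∀ t, f (t + T) = f t + A := by
    intro t
    induction t with
    | zero => simp [hA, hf]
    | succ n ih =>
      have : n + 1 + T = (n + T) + 1 := by ring
      rw [this, hfsucc, hfsucc, ih, hx n]
      omega
  -- shift by a periods
  have hfa : ∀ a t, f (a * T + t) = f t + a * A := by
    intro a
    induction a with
    | zero => simp
    | succ n ih =>
      intro t
      have : (n + 1) * T + t = (n * T + t) + T := by ring
      rw [this, hfT, ih]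
      ring
  have hxa : ∀ a t, x (a * T + t) = x t := by
    intro a
    induction a with
    | zero => simp
    | succ n ih =>
      intro t
      have : (n + 1) * T + t = (n * T + t) + T := by ring
      rw [this, hx, ih]
  -- periodicity mod τ
  have hmod : ∀ (θ : ℕ → Fin N), (∀ t, θ (t + τ) = θ t) → ∀ n, θ n = θ (n % τ) := by
    intro θ hθ n
    conv_lhs => rw [← Nat.mod_add_div n τ]
    generalize n / τ = q
    induction q with
    | zero => simp
    | succ m ih =>
      have : n % τ + τ * (m + 1) = (n % τ + τ * m) + τ := by ring
      rw [this, hθ, ih]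
  set c := f t₀ with hc
  -- rewrite LHS predicate
  have hLpred : ∀ a, (θi' (a * T + t₀) = θj' (a * T + t₀ + k))
      ↔ (θi ((c + a * A) % τ) = θj (((c + a * A) % τ + d) % τ)) := by
    intro a
    have h1 : x (a * T + t₀) = true := by rw [hxa]; exact ht₀
    have h2 : x (a * T + t₀ + k) = true := by
      have : a * T + t₀ + k = a * T + (t₀ + k) := by ring
      rw [this, hxa]; exact ht₀k
    rw [hθi' _ h1, hθj' _ h2]
    have e1 : f (a * T + t₀) = c + a * A := by rw [hfa]
    have e2 : f (a * T + t₀ + k) = c + a * A + d := by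
      have : a * T + t₀ + k = a * T + (t₀ + k) := by ring
      rw [this, hfa, hfd]; try omega
    rw [e1, e2, hmod θi hθi (c + a * A), hmod θj hθj (c + a * A + d),
      Nat.mod_add_mod]
  have hRpred : ∀ b, b ∈ Finset.range τ →
      ((θi b = θj (b + d)) ↔ (θi (b % τ) = θj ((b % τ + d) % τ))) := by
    intro b hb
    rw [Finset.mem_range] at hb
    rw [Nat.mod_eq_of_lt hb, hmod θj hθj (b + d)]
  -- coprimality in ZMod τ
  have hcop : Nat.Coprime A τ := hgcd
  have hunit : (A : ZMod τ) * (A : ZMod τ)⁻¹ = 1 := ZMod.coe_mul_inv_eq_one A hcop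
  -- set up the bijection
  rw [Finset.filter_congr (fun a _ => hLpred a)]
  rw [Finset.filter_congr (fun b hb => hRpred b hb)]
  apply Finset.card_nbij' (i := fun a => (c + a * A) % τ)
    (j := fun b => (((b : ZMod τ) - (c : ZMod τ)) * (A : ZMod τ)⁻¹).val)
  · intro a ha
    simp only [Finset.coe_filter, Finset.mem_coe, Set.mem_setOf_eq, Finset.mem_filter, Finset.mem_range] at ha ⊢
    refine ⟨Nat.mod_lt _ (by omega), ?_⟩
    rw [Nat.mod_mod_of_dvd _ dvd_rfl]
    exact ha.2
  · intro b hb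
    simp only [Finset.coe_filter, Finset.mem_coe, Set.mem_setOf_eq, Finset.mem_filter, Finset.mem_range] at hb ⊢
    set z : ZMod τ := (((b : ZMod τ) - (c : ZMod τ)) * (A : ZMod τ)⁻¹) with hz
    refine ⟨ZMod.val_lt z, ?_⟩
    have key : (c + z.val * A) % τ = b := by
      have : (((c + z.val * A : ℕ) : ZMod τ)) = (b : ZMod τ) := by
        push_cast
        rw [ZMod.natCast_rightInverse z, hz, mul_assoc,
          mul_comm ((A:ZMod τ)⁻¹) ((A:ZMod τ)), hunit, mul_one]
        ring
      have hv := congrArg ZMod.val this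
      rwa [ZMod.val_natCast, ZMod.val_natCast, Nat.mod_eq_of_lt hb.1] at hv
    rw [key]
    have hb2 := hb.2
    rwa [Nat.mod_eq_of_lt hb.1] at hb2
  · intro a ha
    simp only [Finset.coe_filter, Finset.mem_coe, Set.mem_setOf_eq, Finset.mem_filter, Finset.mem_range] at ha
    have : (((c + a * A) % τ : ℕ) : ZMod τ) = (c : ZMod τ) + (a : ZMod τ) * (A : ZMod τ) := by
      rw [ZMod.natCast_mod]; push_cast; ring
    beta_reduce
    rw [this]
    have : ((c : ZMod τ) + (a : ZMod τ) * (A : ZMod τ) - (c : ZMod τ)) * (A : ZMod τ)⁻¹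
        = (a : ZMod τ) := by
      rw [add_sub_cancel_left, mul_assoc, hunit, mul_one]
    rw [this, ZMod.val_natCast, Nat.mod_eq_of_lt ha.1]
  · intro b hb
    simp only [Finset.coe_filter, Finset.mem_coe, Set.mem_setOf_eq, Finset.mem_filter, Finset.mem_range] at hb
    set z : ZMod τ := (((b : ZMod τ) - (c : ZMod τ)) * (A : ZMod τ)⁻¹) with hz
    have : (((c + z.val * A : ℕ) : ZMod τ)) = (b : ZMod τ) := by
      push_cast
      rw [ZMod.natCast_rightInverse z, hz, mul_assoc,
        mul_comm ((A:ZMod τ)⁻¹) ((A:ZMod τ)), hunit, mul_one]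
      ring
    have hv := congrArg ZMod.val this
    rwa [ZMod.val_natCast, ZMod.val_natCast, Nat.mod_eq_of_lt hb.1] at hv
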